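/- Let G be a graph, H a subgraph, and P = (u₀, …, u_k) a path in G with u₀ ∈ V(H). Then the K-projection of P (with respect to the dominated torso K of H in G) is a walk in K starting at u₀. -/

import Mathlib

/-- A ray in `G`: a one-way infinite path. -/
def IsRay {V : Type*} (G : SimpleGraph V) (f : ℕ → V) : Prop :=
  Function.Injective f ∧ ∀ n, G.Adj (f n) (f (n + 1))

/-- `F` separates `U` from `S` in `G`: every path (walk) from a vertex of `U`
to a vertex of `S` meets `F`. -/
def Separates {V : Type*} (G : SimpleGraph V) (F U S : Set V) : Prop :=
  ∀ u ∈ U, ∀ s ∈ S, ∀ p : G.Walk u s, ∃ x ∈ p.support, x ∈ F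

/-- `U` is dispersed in `G`: every ray can be separated from `U` by a finite vertex set. -/
def Dispersed {V : Type*} (G : SimpleGraph V) (U : Set V) : Prop :=
  ∀ f : ℕ → V, IsRay G f → ∃ F : Set V, F.Finite ∧ Separates G F U (Set.range f)

/-- `v` is reachable from `u` by a walk avoiding `H` entirely. -/
def ReachOutside {V : Type*} (G : SimpleGraph V) (H : Set V) (u v : V) : Prop :=
  ∃ p : G.Walk u v, ∀ x ∈ p.support, x ∉ H

/-- `D` is a connected component of `G − H` (the induced subgraph on `V(G) \ H`). -/
def IsComp {V : Type*} (G : SimpleGraph V) (H D : Set V) : Prop :=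
  D.Nonempty ∧ ∀ u ∈ D, ∀ v : V, (v ∈ D ↔ v ∉ H ∧ ReachOutside G H u v)

/-- The neighborhood `N_G(D)`: vertices outside `D` adjacent in `G` to a vertex of `D`. -/
def nbhdOf {V : Type*} (G : SimpleGraph V) (D : Set V) : Set V :=
  {v | v ∉ D ∧ ∃ d ∈ D, G.Adj v d}

/-- `H` has finite adhesion in `G`: every component of `G − H` has finite neighborhood. -/
def FiniteAdhesion {V : Type*} (G : SimpleGraph V) (H : Set V) : Prop :=
  ∀ D : Set V, IsComp G H D → (nbhdOf G D).Finite

/-- The component of `G − H` containing `u` (for `u ∉ H`). -/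
def compOf {V : Type*} (G : SimpleGraph V) (H : Set V) (u : V) : Set V :=
  {v | v ∉ H ∧ ReachOutside G H u v}

/-- `𝒟′`: components of `G − H` whose adhesion set is shared by only finitely
many components. -/
def Dfin {V : Type*} (G : SimpleGraph V) (H : Set V) : Set (Set V) :=
  {D | IsComp G H D ∧ {D' | IsComp G H D' ∧ nbhdOf G D' = nbhdOf G D}.Finite}

/-- `𝒟″`: components of `G − H` whose adhesion set is shared by infinitely
many components. -/
def Dinf {V : Type*} (G : SimpleGraph V) (H : Set V) : Set (Set V) :=
  {D | IsComp G H D ∧ ¬ {D' | IsComp G H D' ∧ nbhdOf G D' = nbhdOf G D}.Finite}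

/-- `η` is an admissible contraction map: each `D ∈ 𝒟″` is contracted onto a vertex
`η D ∈ N_G(D)`, and for every `D ∈ 𝒟″` the map `η` restricted to the components
sharing the adhesion set `N_G(D)` surjects onto `N_G(D)`. -/
def EtaOK {V : Type*} (G : SimpleGraph V) (H : Set V) (η : Set V → V) : Prop :=
  (∀ D ∈ Dinf G H, η D ∈ nbhdOf G D) ∧
  (∀ D ∈ Dinf G H, ∀ a ∈ nbhdOf G D,
    ∃ D' ∈ Dinf G H, nbhdOf G D' = nbhdOf G D ∧ η D' = a)

open Classical in
/-- The contraction map `ρ` onto the vertex set of the dominated torso: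
vertices of `H` are kept, each `D ∈ 𝒟′` is contracted to the new vertex
`Sum.inr D`, and each `D ∈ 𝒟″` is contracted onto `η D ∈ N_G(D)`. -/
noncomputable def rho {V : Type*} (G : SimpleGraph V) (H : Set V) (η : Set V → V) :
    V → V ⊕ Set V := fun u =>
  if u ∈ H then Sum.inl u
  else if compOf G H u ∈ Dfin G H then Sum.inr (compOf G H u)
  else Sum.inl (η (compOf G H u))

/-- The dominated torso `K` of `H` in `G`: the contraction minor of `G`
witnessed by `ρ`. -/
noncomputable def Torso {V : Type*} (G : SimpleGraph V) (H : Set V) (η : Set V → V) :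
    SimpleGraph (V ⊕ Set V) where
  Adj a b := a ≠ b ∧ ∃ u v : V, rho G H η u = a ∧ rho G H η v = b ∧ G.Adj u v
  symm := by
    constructor
    rintro a b ⟨hne, u, v, hu, hv, huv⟩
    exact ⟨hne.symm, v, u, hv, hu, huv.symm⟩
  loopless := by constructor; rintro a ⟨hne, -⟩; exact hne rfl

/-- The vertex set of the dominated torso. -/
def torsoVerts {V : Type*} (G : SimpleGraph V) (H : Set V) : Set (V ⊕ Set V) :=
  Sum.inl '' H ∪ Sum.inr '' Dfin G H

/-- A tendril in `G`: a ray with infinitely many vertices in `H`. -/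
def IsTendril {V : Type*} (G : SimpleGraph V) (H : Set V) (f : ℕ → V) : Prop :=
  IsRay G f ∧ {n | f n ∈ H}.Infinite

open Classical in
/-- The `H`-masking of a sequence: vertices outside `H` are replaced by their
component of `G − H`. -/
noncomputable def mask {V : Type*} (G : SimpleGraph V) (H : Set V) : V → V ⊕ Set V :=
  fun u => if u ∈ H then Sum.inl u else Sum.inr (compOf G H u)

/-- The indices of a ray kept by the `K`-projection: vertices of `H`, and the
first index of each maximal run of a component `D ∈ 𝒟′`. -/
def keepIdx {V : Type*} (G : SimpleGraph V) (H : Set V) (f : ℕ → V) (n : ℕ) : Prop :=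
  f n ∈ H ∨
    (f n ∉ H ∧ compOf G H (f n) ∈ Dfin G H ∧
      (n = 0 ∨ mask G H (f (n - 1)) ≠ mask G H (f n)))

/-- The `K`-projection of a tendril: maximal runs of a component `D ∈ 𝒟′` are
replaced by the single vertex `v_D`, and terms in components of `𝒟″` are removed. -/
noncomputable def rayProj {V : Type*} (G : SimpleGraph V) (H : Set V) (η : Set V → V)
    (f : ℕ → V) : ℕ → V ⊕ Set V :=
  fun m => rho G H η (f (Nat.nth (keepIdx G H f) m))

/-- `D̂′`: components of `𝒟′` whose contracted vertex lies in `F`. -/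
def DhatFin {V : Type*} (G : SimpleGraph V) (H : Set V) (F : Set (V ⊕ Set V)) :
    Set (Set V) :=
  {D | D ∈ Dfin G H ∧ Sum.inr D ∈ F}

/-- `D̂″`: components `D ∈ 𝒟″` such that some term of the `H`-masking of the
tendril equals `D` and the next vertex of the tendril lies in `F`. -/
def DhatInf {V : Type*} (G : SimpleGraph V) (H : Set V) (f : ℕ → V)
    (F : Set (V ⊕ Set V)) : Set (Set V) :=
  {D | D ∈ Dinf G H ∧ ∃ n : ℕ, f n ∉ H ∧ compOf G H (f n) = D ∧ Sum.inl (f (n + 1)) ∈ F}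

/-- The `S`-modification `F_S` of a set `F ⊆ V(K)`. -/
def Smod {V : Type*} (G : SimpleGraph V) (H : Set V) (f : ℕ → V)
    (F : Set (V ⊕ Set V)) : Set V :=
  (Sum.inl ⁻¹' F ∩ H) ∪ ⋃ D ∈ DhatFin G H F ∪ DhatInf G H f F, nbhdOf G D

open Classical in
/-- The `K`-projection of a finite sequence of vertices: apply the `H`-masking,
collapse maximal runs of identical consecutive terms, and delete all terms lying
in components of `𝒟″`. -/
noncomputable def projList {V : Type*} (G : SimpleGraph V) (H : Set V)
    (l : List V) : List (V ⊕ Set V) :=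
  ((l.map (mask G H)).destutter (· ≠ ·)).filter
    (fun w => decide (¬ ∃ D ∈ Dinf G H, w = Sum.inr D))

section Aux

variable {V : Type*} {G : SimpleGraph V} {H : Set V}

lemma mem_compOf {u : V} (hu : u ∉ H) : u ∈ compOf G H u :=
  ⟨hu, SimpleGraph.Walk.nil, by simp [hu]⟩

lemma ReachOutside.symm {u v : V} (h : ReachOutside G H u v) : ReachOutside G H v u := by
  obtain ⟨p, hp⟩ := h
  exact ⟨p.reverse, by simpa using hp⟩

lemma ReachOutside.trans {u v w : V} (h : ReachOutside G H u v)
    (h' : ReachOutside G H v w) : ReachOutside G H u w := by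
  obtain ⟨p, hp⟩ := h
  obtain ⟨q, hq⟩ := h'
  refine ⟨p.append q, fun x hx => ?_⟩
  rw [SimpleGraph.Walk.mem_support_append_iff] at hx
  exact hx.elim (hp x) (hq x)

lemma isComp_compOf {u : V} (hu : u ∉ H) : IsComp G H (compOf G H u) := by
  refine ⟨⟨u, mem_compOf hu⟩, fun d hd v => ?_⟩
  constructor
  · rintro ⟨hv, hr⟩
    exact ⟨hv, hd.2.symm.trans hr⟩
  · rintro ⟨hv, hr⟩
    exact ⟨hv, hd.2.trans hr⟩

lemma notMem_of_mem_comp {D : Set V} (hD : IsComp G H D) {d : V} (hd : d ∈ D) : d ∉ H :=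
  (((hD.2 d hd) d).mp hd).1

lemma compOf_eq_of_mem {D : Set V} (hD : IsComp G H D) {d : V} (hd : d ∈ D) :
    compOf G H d = D :=
  Set.ext fun v => ((hD.2 d hd) v).symm

lemma compOf_adj_eq {u v : V} (hu : u ∉ H) (hv : v ∉ H) (h : G.Adj u v) :
    compOf G H u = compOf G H v := by
  have hvmem : v ∈ compOf G H u :=
    ⟨hv, SimpleGraph.Walk.cons h SimpleGraph.Walk.nil, by
      intro x hx
      simp only [SimpleGraph.Walk.support_cons, SimpleGraph.Walk.support_nil,
        List.mem_cons, List.mem_singleton] at hx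
      rcases hx with rfl | rfl | h; exact hu; exact hv; exact absurd h (by simp)⟩
  exact (compOf_eq_of_mem (isComp_compOf hu) hvmem).symm

lemma mem_nbhd_of_adj {h u : V} (hh : h ∈ H) (hu : u ∉ H) (hadj : G.Adj h u) :
    h ∈ nbhdOf G (compOf G H u) :=
  ⟨fun hc => hc.1 hh, u, mem_compOf hu, hadj⟩

lemma dfin_or_dinf {u : V} (hu : u ∉ H) :
    compOf G H u ∈ Dfin G H ∨ compOf G H u ∈ Dinf G H := by
  by_cases hf : {D' | IsComp G H D' ∧ nbhdOf G D' = nbhdOf G (compOf G H u)}.Finite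
  · exact Or.inl ⟨isComp_compOf hu, hf⟩
  · exact Or.inr ⟨isComp_compOf hu, hf⟩

lemma notMem_dfin_of_dinf {D : Set V} (h : D ∈ Dinf G H) : D ∉ Dfin G H :=
  fun h' => h.2 h'.2

variable (η : Set V → V)

lemma rho_of_mem {h : V} (hh : h ∈ H) : rho G H η h = Sum.inl h := by
  simp [rho, hh]

lemma rho_of_fin {u : V} (hu : u ∉ H) (h : compOf G H u ∈ Dfin G H) :
    rho G H η u = Sum.inr (compOf G H u) := by
  simp [rho, hu, h]

lemma rho_of_inf {u : V} (hu : u ∉ H) (h : compOf G H u ∉ Dfin G H) :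
    rho G H η u = Sum.inl (η (compOf G H u)) := by
  simp [rho, hu, h]

lemma tadj_HH {a b : V} (ha : a ∈ H) (hb : b ∈ H) (hadj : G.Adj a b) :
    (Torso G H η).Adj (Sum.inl a) (Sum.inl b) :=
  ⟨by simpa using hadj.ne, a, b, rho_of_mem η ha, rho_of_mem η hb, hadj⟩

lemma tadj_Hfin {a u : V} (ha : a ∈ H) (hu : u ∉ H) (hfin : compOf G H u ∈ Dfin G H)
    (hadj : G.Adj a u) :
    (Torso G H η).Adj (Sum.inl a) (Sum.inr (compOf G H u)) :=
  ⟨by simp, a, u, rho_of_mem η ha, rho_of_fin η hu hfin, hadj⟩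

lemma tadj_bridge (hη : EtaOK G H η) {D : Set V} (hD : D ∈ Dinf G H) {a b : V}
    (ha : a ∈ H) (hb : b ∈ H) (hab : a ≠ b)
    (haD : a ∈ nbhdOf G D) (hbD : b ∈ nbhdOf G D) :
    (Torso G H η).Adj (Sum.inl a) (Sum.inl b) := by
  obtain ⟨D', hD', hnb, hb'⟩ := hη.2 D hD b hbD
  have haD' : a ∈ nbhdOf G D' := hnb ▸ haD
  obtain ⟨-, d, hd, hadj⟩ := haD'
  have hdH : d ∉ H := notMem_of_mem_comp hD'.1 hd
  have hcd : compOf G H d = D' := compOf_eq_of_mem hD'.1 hd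
  refine ⟨by simpa using hab, a, d, rho_of_mem η ha, ?_, hadj⟩
  rw [rho_of_inf η hdH (hcd ▸ notMem_dfin_of_dinf hD'), hcd, hb']

end Aux

section Main

open Classical

variable {V : Type*} (G : SimpleGraph V) (H : Set V)

/-- The projection of the tail of a list, given the current destutter head `x`. -/
noncomputable def projTail (x : V ⊕ Set V) (t : List V) : List (V ⊕ Set V) :=
  ((t.map (mask G H)).destutter' (· ≠ ·) x).filter
    (fun w => decide (¬ ∃ D ∈ Dinf G H, w = Sum.inr D))

lemma projList_cons (a : V) (t : List V) :
    projList G H (a :: t) = projTail G H (mask G H a) t := by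
  simp [projList, projTail, List.destutter_cons']

lemma projTail_nil_keep {x : V ⊕ Set V} (hx : ¬ ∃ D ∈ Dinf G H, x = Sum.inr D) :
    projTail G H x [] = [x] := by
  simp [projTail, List.destutter'_nil, List.filter_cons, hx]

lemma projTail_nil_drop {x : V ⊕ Set V} (hx : ∃ D ∈ Dinf G H, x = Sum.inr D) :
    projTail G H x [] = [] := by
  simp only [projTail, List.map_nil, List.destutter'_nil, List.filter_cons]
  simp [hx]

lemma projTail_cons_ne_keep {x : V ⊕ Set V} {b : V} {t : List V}
    (h : x ≠ mask G H b) (hx : ¬ ∃ D ∈ Dinf G H, x = Sum.inr D) :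
    projTail G H x (b :: t) = x :: projTail G H (mask G H b) t := by
  simp only [projTail, List.map_cons]
  rw [List.destutter'_cons_pos _ h, List.filter_cons]
  simp [hx]

lemma projTail_cons_ne_drop {x : V ⊕ Set V} {b : V} {t : List V}
    (h : x ≠ mask G H b) (hx : ∃ D ∈ Dinf G H, x = Sum.inr D) :
    projTail G H x (b :: t) = projTail G H (mask G H b) t := by
  simp only [projTail, List.map_cons]
  rw [List.destutter'_cons_pos _ h, List.filter_cons]
  simp [hx]

lemma projTail_cons_eq {x : V ⊕ Set V} {b : V} {t : List V}
    (h : x = mask G H b) :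
    projTail G H x (b :: t) = projTail G H x t := by
  simp only [projTail, List.map_cons]
  rw [List.destutter'_cons_neg _ (by simp [h])]

lemma mask_of_mem {h : V} (hh : h ∈ H) : mask G H h = Sum.inl h := by
  simp [mask, hh]

lemma mask_of_notMem {u : V} (hu : u ∉ H) : mask G H u = Sum.inr (compOf G H u) := by
  simp [mask, hu]

variable {G H} (η : Set V → V)

lemma main_chain (hη : EtaOK G H η) :
    ∀ t : List V, ∀ cur : V, List.Chain' G.Adj (cur :: t) → (cur :: t).Nodup →
    ((cur ∈ H →
        List.Chain' (Torso G H η).Adj (projTail G H (Sum.inl cur) t) ∧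
        (projTail G H (Sum.inl cur) t).head? = some (Sum.inl cur)) ∧
     (cur ∉ H →
        List.Chain' (Torso G H η).Adj (projTail G H (Sum.inr (compOf G H cur)) t) ∧
        ((compOf G H cur ∈ Dfin G H ∧
            (projTail G H (Sum.inr (compOf G H cur)) t).head? =
              some (Sum.inr (compOf G H cur))) ∨
          (projTail G H (Sum.inr (compOf G H cur)) t).head? = none ∨
          (compOf G H cur ∈ Dinf G H ∧ ∃ h₂ ∈ t,
            (projTail G H (Sum.inr (compOf G H cur)) t).head? = some (Sum.inl h₂) ∧
            h₂ ∈ H ∧ h₂ ∈ nbhdOf G (compOf G H cur))))) := by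
  intro t
  induction t with
  | nil =>
    intro cur _ _
    constructor
    · intro hcur
      rw [projTail_nil_keep G H (by simp)]
      exact ⟨List.isChain_singleton _, rfl⟩
    · intro hcur
      rcases dfin_or_dinf hcur with hf | hf
      · have hkeep : ¬ ∃ D ∈ Dinf G H,
            (Sum.inr (compOf G H cur) : V ⊕ Set V) = Sum.inr D := by
          rintro ⟨D, hD, hDeq⟩
          rw [Sum.inr.injEq] at hDeq
          exact notMem_dfin_of_dinf hD (hDeq ▸ hf)
        rw [projTail_nil_keep G H hkeep]
        exact ⟨List.isChain_singleton _, Or.inl ⟨hf, rfl⟩⟩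
      · rw [projTail_nil_drop G H ⟨_, hf, rfl⟩]
        exact ⟨List.isChain_nil, Or.inr (Or.inl rfl)⟩
  | cons b t ih =>
    intro cur hchain hnodup
    have hadj : G.Adj cur b := (List.isChain_cons_cons.mp hchain).1
    have hchain' : List.Chain' G.Adj (b :: t) := (List.isChain_cons_cons.mp hchain).2
    have hnodup' : (b :: t).Nodup := hnodup.of_cons
    have IH := ih b hchain' hnodup'
    constructor
    · -- cur ∈ H
      intro hcur
      by_cases hb : b ∈ H
      · -- next in H
        have hne : (Sum.inl cur : V ⊕ Set V) ≠ mask G H b := by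
          rw [mask_of_mem G H hb]; simpa using hadj.ne
        rw [projTail_cons_ne_keep G H hne (by simp), mask_of_mem G H hb]
        obtain ⟨hc, hh⟩ := IH.1 hb
        refine ⟨List.isChain_cons.mpr ⟨?_, hc⟩, rfl⟩
        intro y hy
        rw [hh, Option.mem_some_iff] at hy
        exact hy ▸ tadj_HH η hcur hb hadj
      · -- next outside H
        have hne : (Sum.inl cur : V ⊕ Set V) ≠ mask G H b := by
          rw [mask_of_notMem G H hb]; simp
        rw [projTail_cons_ne_keep G H hne (by simp), mask_of_notMem G H hb]
        obtain ⟨hc, hh⟩ := IH.2 hb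
        refine ⟨List.isChain_cons.mpr ⟨?_, hc⟩, rfl⟩
        intro y hy
        rcases hh with ⟨hfin, hh⟩ | hh | ⟨hinf, h₂, hh₂, hh, h₂H, h₂nb⟩
        · rw [hh, Option.mem_some_iff] at hy
          exact hy ▸ tadj_Hfin η hcur hb hfin hadj
        · rw [hh] at hy; simp at hy
        · rw [hh, Option.mem_some_iff] at hy
          subst hy
          have hcurnb : cur ∈ nbhdOf G (compOf G H b) := mem_nbhd_of_adj hcur hb hadj
          have hne₂ : cur ≠ h₂ := by
            rintro rfl
            exact (List.nodup_cons.mp hnodup).1 (List.mem_cons_of_mem b hh₂)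
          exact tadj_bridge η hη hinf hcur h₂H hne₂ hcurnb h₂nb
    · -- cur ∉ H
      intro hcur
      by_cases hb : b ∈ H
      · -- leaving the component
        have hne : (Sum.inr (compOf G H cur) : V ⊕ Set V) ≠ mask G H b := by
          rw [mask_of_mem G H hb]; simp
        have hbnb : b ∈ nbhdOf G (compOf G H cur) := mem_nbhd_of_adj hb hcur hadj.symm
        obtain ⟨hc, hh⟩ := IH.1 hb
        rcases dfin_or_dinf hcur with hf | hf
        · -- D ∈ 𝒟′ : keep the contracted vertex
          have hkeep : ¬ ∃ D ∈ Dinf G H,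
              (Sum.inr (compOf G H cur) : V ⊕ Set V) = Sum.inr D := by
            rintro ⟨D, hD, hDeq⟩
            rw [Sum.inr.injEq] at hDeq
            exact notMem_dfin_of_dinf hD (hDeq ▸ hf)
          rw [projTail_cons_ne_keep G H hne hkeep, mask_of_mem G H hb]
          refine ⟨List.isChain_cons.mpr ⟨?_, hc⟩, Or.inl ⟨hf, rfl⟩⟩
          intro y hy
          rw [hh, Option.mem_some_iff] at hy
          exact hy ▸ (tadj_Hfin η hb hcur hf hadj.symm).symm
        · -- D ∈ 𝒟″ : drop the contracted vertex
          rw [projTail_cons_ne_drop G H hne ⟨_, hf, rfl⟩, mask_of_mem G H hb]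
          exact ⟨hc, Or.inr (Or.inr ⟨hf, b, List.mem_cons_self, hh, hb, hbnb⟩)⟩
      · -- staying in the component
        have hcomp : compOf G H cur = compOf G H b := compOf_adj_eq hcur hb hadj
        have heq : (Sum.inr (compOf G H cur) : V ⊕ Set V) = mask G H b := by
          rw [mask_of_notMem G H hb, hcomp]
        rw [projTail_cons_eq G H heq, hcomp]
        obtain ⟨hc, hh⟩ := IH.2 hb
        refine ⟨hc, ?_⟩
        rcases hh with h | h | ⟨hinf, h₂, hh₂, hrest⟩
        · exact Or.inl h
        · exact Or.inr (Or.inl h)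
        · exact Or.inr (Or.inr ⟨hinf, h₂, List.mem_cons_of_mem b hh₂, hrest⟩)

end Main

/-- The `K`-projection of a path in `G` starting at a vertex `u₀ ∈ V(H)` is a
walk in the dominated torso `K` starting at `u₀`. -/
theorem projList_walk {V : Type*} (G : SimpleGraph V) (H : Set V) (η : Set V → V)
    (hadh : FiniteAdhesion G H) (hη : EtaOK G H η)
    {u₀ v : V} (p : G.Walk u₀ v) (hp : p.IsPath) (hu₀ : u₀ ∈ H) :
    List.Chain' (Torso G H η).Adj (projList G H p.support) ∧
      (projList G H p.support).head? = some (Sum.inl u₀) := by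
  have hsup : p.support = u₀ :: p.support.tail := p.support_eq_cons
  have hchain : List.Chain' G.Adj (u₀ :: p.support.tail) := hsup ▸ p.isChain_adj_support
  have hnodup : (u₀ :: p.support.tail).Nodup := hsup ▸ hp.support_nodup
  have hmain := (main_chain η hη p.support.tail u₀ hchain hnodup).1 hu₀
  rw [hsup, projList_cons, mask_of_mem G H hu₀]
  exact hmain
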